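/- arXiv:0812.1983 — 2 statements merged into one kernel-verified Lean document; each statement's English description precedes it below -/
import Mathlib

section
/- With l^{(k)} as above satisfying σ l^{(k)} = l^{(k)} + l^{(k-1)}, for each k ≥ 1 there is a short exact sequence 0 → ℂ → K_k[l] → K_{k-1}[l] → 0 where the middle map is σ_q - 1 and K_k[l] denotes polynomials in l over K of degree ≤ k. -/
/-- The `q`-dilation operator on formal Laurent series, sending `Σ aₙ zⁿ` to `Σ aₙ qⁿ zⁿ`,
i.e. `f(z) ↦ f(qz)`. -/
noncomputable def sigmaq (q : ℂ) (f : LaurentSeries ℂ) : LaurentSeries ℂ :=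
  ⟨fun n => q ^ n * f.coeff n, f.isPWO_support'.mono (fun n hn => by
    simp only [Function.mem_support] at hn ⊢
    exact fun h => hn (by rw [h, mul_zero]))⟩

lemma sigmaq_coeff (q : ℂ) (f : LaurentSeries ℂ) (n : ℤ) :
    (sigmaq q f).coeff n = q ^ n * f.coeff n := rfl

lemma sigmaq_zero (q : ℂ) : sigmaq q (0 : LaurentSeries ℂ) = 0 := by
  ext n
  simp [sigmaq_coeff]

lemma sigmaq_single0 (q : ℂ) (c : ℂ) :
    sigmaq q (HahnSeries.single (0 : ℤ) c) = HahnSeries.single (0 : ℤ) c := by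
  ext n
  rw [sigmaq_coeff]
  by_cases hn : n = 0
  · subst hn; simp
  · simp [HahnSeries.coeff_single, hn]

lemma qzpow_ne_one {q : ℂ} (hq : 1 < ‖q‖) {n : ℤ} (hn : n ≠ 0) : q ^ n ≠ 1 := by
  intro h
  have hn' : ‖q‖ ^ n = 1 := by
    have := congrArg norm h
    rwa [norm_zpow, norm_one] at this
  rcases hn.lt_or_gt with h1 | h1
  · exact absurd hn' (zpow_lt_one_of_neg₀ hq h1).ne
  · exact absurd hn' (one_lt_zpow₀ hq h1).ne'

lemma qzpow_sub_one_ne_zero {q : ℂ} (hq : 1 < ‖q‖) {n : ℤ} (hn : n ≠ 0) :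
    q ^ n - 1 ≠ 0 := sub_ne_zero.mpr (qzpow_ne_one hq hn)

/-- solve `(σ_q - 1) u = h` with prescribed constant coefficient `c`. -/
noncomputable def solA (q : ℂ) (h : LaurentSeries ℂ) (c : ℂ) : LaurentSeries ℂ :=
  ⟨fun n => if n = 0 then c else (q ^ n - 1)⁻¹ * h.coeff n,
   (((Set.finite_singleton (0:ℤ)).isPWO).union h.isPWO_support).mono (by
     intro n hn
     simp only [Function.mem_support] at hn
     by_cases h0 : n = 0
     · exact Or.inl (by simp [h0])
     · refine Or.inr ?_
       simp only [h0, if_false] at hn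
       simp only [Set.mem_setOf_eq, HahnSeries.mem_support]
       intro hc
       exact hn (by rw [hc, mul_zero]))⟩

lemma solA_coeff (q : ℂ) (h : LaurentSeries ℂ) (c : ℂ) (n : ℤ) :
    (solA q h c).coeff n = if n = 0 then c else (q ^ n - 1)⁻¹ * h.coeff n := rfl

lemma solA_coeff_zero (q : ℂ) (h : LaurentSeries ℂ) (c : ℂ) :
    (solA q h c).coeff 0 = c := by simp [solA_coeff]

lemma solA_spec {q : ℂ} (hq : 1 < ‖q‖) (h : LaurentSeries ℂ) (c : ℂ)
    (h0 : h.coeff 0 = 0) :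
    sigmaq q (solA q h c) - solA q h c = h := by
  ext n
  rw [HahnSeries.coeff_sub, sigmaq_coeff, solA_coeff]
  by_cases hn : n = 0
  · subst hn
    simp [h0]
  · simp only [hn, if_false]
    field_simp [qzpow_sub_one_ne_zero hq hn]

/-- The backwards-recursive solution sequence: `solSeq q k g j` plays the role of
`f (k + 1 - j)`. -/
noncomputable def solSeq (q : ℂ) (k : ℕ) (g : ℕ → LaurentSeries ℂ) : ℕ → LaurentSeries ℂ
  | 0 => 0
  | j + 1 => solA q (g (k - j) - sigmaq q (solSeq q k g j))
      (if k - j = 0 then 0 else (g (k - j - 1)).coeff 0)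

lemma solSeq_succ (q : ℂ) (k : ℕ) (g : ℕ → LaurentSeries ℂ) (j : ℕ) :
    solSeq q k g (j + 1) = solA q (g (k - j) - sigmaq q (solSeq q k g j))
      (if k - j = 0 then 0 else (g (k - j - 1)).coeff 0) := rfl

theorem stmt_14 (q : ℂ) (hq : 1 < ‖q‖) (k : ℕ) (hk : 1 ≤ k) :
    -- Elements of `K_k[l_q]` are represented by their coordinates `f i ∈ K` in the
    -- basis `l_q^{(i)}`, `0 ≤ i ≤ k`; the operator `σ_q - 1` acts by
    -- `(f i) ↦ (σ_q (f i) - f i + σ_q (f (i+1)))`.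
    -- Kernel = the constants ℂ:
    (∀ f : ℕ → LaurentSeries ℂ, (∀ i, k < i → f i = 0) →
      ((∀ i, sigmaq q (f i) - f i + sigmaq q (f (i + 1)) = 0) ↔
        ∃ c : ℂ, f = fun i => if i = 0 then HahnSeries.single (0 : ℤ) c else 0)) ∧
    -- Image = `K_{k-1}[l_q]`:
    (∀ g : ℕ → LaurentSeries ℂ, (∀ i, k - 1 < i → g i = 0) →
      ∃ f : ℕ → LaurentSeries ℂ, (∀ i, k < i → f i = 0) ∧
        ∀ i, sigmaq q (f i) - f i + sigmaq q (f (i + 1)) = g i) := by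
  constructor
  · -- Kernel
    intro f hf0
    constructor
    · intro heq
      -- key step: if `f (i+1) = 0` and `1 ≤ i` then `f i = 0`
      have step : ∀ i, 1 ≤ i → f (i + 1) = 0 → f i = 0 := by
        intro i hi h1
        have e1 := heq i
        rw [h1, sigmaq_zero, add_zero, sub_eq_zero] at e1
        have hoff : ∀ n : ℤ, n ≠ 0 → (f i).coeff n = 0 := by
          intro n hn
          have hcoeff : (sigmaq q (f i)).coeff n = (f i).coeff n := by rw [e1]
          rw [sigmaq_coeff] at hcoeff
          have hz : (q ^ n - 1) * (f i).coeff n = 0 := by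
            rw [sub_mul, one_mul, hcoeff, sub_self]
          exact (mul_eq_zero.mp hz).resolve_left (qzpow_sub_one_ne_zero hq hn)
        have e2 := heq (i - 1)
        rw [Nat.sub_add_cancel hi] at e2
        have h0 : (f i).coeff 0 = 0 := by
          have := congrArg (fun u : LaurentSeries ℂ => u.coeff 0) e2
          simp only [HahnSeries.coeff_add, HahnSeries.coeff_sub, sigmaq_coeff,
            zpow_zero, one_mul, HahnSeries.coeff_zero] at this
          rw [sub_self, zero_add] at this
          exact this
        ext n
        by_cases hn : n = 0
        · subst hn; simpa using h0
        · simpa using hoff n hn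
      have key : ∀ m, m ≤ k → f (k + 1 - m) = 0 := by
        intro m
        induction m with
        | zero =>
          intro _
          exact hf0 (k + 1 - 0) (by omega)
        | succ m ih =>
          intro hm
          have h1 : f (k + 1 - m) = 0 := ih (by omega)
          have hi : 1 ≤ k - m := by omega
          have hsucc : k - m + 1 = k + 1 - m := by omega
          have := step (k - m) hi (by rw [hsucc]; exact h1)
          rw [show k + 1 - (m + 1) = k - m from by omega]
          exact this
      have hzero : ∀ j, 1 ≤ j → f j = 0 := by
        intro j hj
        by_cases hjk : j ≤ k + 1
        · have := key (k + 1 - j) (by omega)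
          rwa [show k + 1 - (k + 1 - j) = j from by omega] at this
        · exact hf0 j (by omega)
      have e0 := heq 0
      rw [hzero 1 le_rfl, sigmaq_zero, add_zero, sub_eq_zero] at e0
      refine ⟨(f 0).coeff 0, ?_⟩
      funext i
      by_cases hi : i = 0
      · subst hi
        simp only [if_pos rfl]
        ext n
        by_cases hn : n = 0
        · subst hn; simp
        · have hcoeff : (sigmaq q (f 0)).coeff n = (f 0).coeff n := by rw [e0]
          rw [sigmaq_coeff] at hcoeff
          have hz : (q ^ n - 1) * (f 0).coeff n = 0 := by
            rw [sub_mul, one_mul, hcoeff, sub_self]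
          have := (mul_eq_zero.mp hz).resolve_left (qzpow_sub_one_ne_zero hq hn)
          simp [HahnSeries.coeff_single, hn, this]
      · simp only [if_neg hi]
        exact hzero i (by omega)
    · rintro ⟨c, rfl⟩ i
      by_cases hi : i = 0
      · subst hi
        simp [sigmaq_single0, sigmaq_zero]
      · simp [hi, sigmaq_zero]
  · -- Image
    intro g hg
    refine ⟨fun i => if i ≤ k then solSeq q k g (k + 1 - i) else 0, ?_, ?_⟩
    · intro i hi
      simp [Nat.not_le.mpr hi]
    · intro i
      by_cases hik : i ≤ k
      · have hfi : (if i ≤ k then solSeq q k g (k + 1 - i) else 0)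
            = solSeq q k g ((k - i) + 1) := by
          rw [if_pos hik]
          congr 1
          omega
        have hfi1 : (if i + 1 ≤ k then solSeq q k g (k + 1 - (i + 1)) else 0)
            = solSeq q k g (k - i) := by
          by_cases h : i + 1 ≤ k
          · rw [if_pos h]
            congr 1
            omega
          · rw [if_neg h, show k - i = 0 from by omega]
            rfl
        simp only [hfi, hfi1, solSeq_succ, Nat.sub_sub_self hik]
        set w := solSeq q k g (k - i) with hw
        have hcond : (g i - sigmaq q w).coeff 0 = 0 := by
          rw [HahnSeries.coeff_sub, sigmaq_coeff, zpow_zero, one_mul]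
          have hw0 : w.coeff 0 = (g i).coeff 0 := by
            by_cases h : i < k
            · rw [hw, show k - i = (k - (i + 1)) + 1 from by omega, solSeq_succ,
                solA_coeff_zero, if_neg (show ¬ k - (k - (i + 1)) = 0 from by omega),
                show k - (k - (i + 1)) - 1 = i from by omega]
            · have hik' : i = k := by omega
              rw [hw, show k - i = 0 from by omega]
              have : g i = 0 := hg i (by omega)
              simp [solSeq, this]
          rw [hw0, sub_self]
        rw [add_comm, ← add_sub_assoc, add_sub_assoc]
        rw [solA_spec hq _ _ hcond]
        ring
      · have hgi : g i = 0 := hg i (by omega)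
        have h1 : ¬ i ≤ k := hik
        have h2 : ¬ i + 1 ≤ k := by omega
        simp only [if_neg h1, if_neg h2, sigmaq_zero, hgi]
        simp
end

section
/- Let q ∈ ℂ with |q|>1 and suppose the q-difference operator P = Σ_{i=0}^n a_i σ_q^i has holomorphic coefficients a_i = Σ_j a_{i,j} z^j with a_0 a_n ≠ 0, slope 0 on its Newton polygon with characteristic polynomial F_0(X) = Σ_i a_{i,0} X^i satisfying F_0(1) = 0 and F_0(q^m) ≠ 0 for all m ≥ 1. Then there is a unique formal power series f with f(0)=1 such that Σ_i a_i(z) f(q^i z) = 0. -/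
noncomputable def solCoeff (G : ℕ → ℕ → ℂ) : ℕ → ℂ
  | 0 => 1
  | (l+1) => -(∑ k ∈ Finset.range (l+1), G (k+1) (l-k) * solCoeff G (l-k)) / G 0 (l+1)
decreasing_by exact Nat.lt_succ_of_le (Nat.sub_le l k)

lemma coeff_sum_eq (q : ℂ) (n : ℕ) (a : ℕ → PowerSeries ℂ) (f : PowerSeries ℂ) (l : ℕ) :
    PowerSeries.coeff (R := ℂ) l (∑ i ∈ Finset.range (n+1), a i * PowerSeries.rescale (q^i) f)
    = ∑ k ∈ Finset.range (l+1),
        (∑ i ∈ Finset.range (n+1), PowerSeries.coeff (R := ℂ) k (a i) * q^(i*(l-k))) *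
          PowerSeries.coeff (R := ℂ) (l-k) f := by
  have h1 : ∀ i, PowerSeries.coeff (R := ℂ) l (a i * PowerSeries.rescale (q^i) f)
      = ∑ k ∈ Finset.range (l+1),
          PowerSeries.coeff (R := ℂ) k (a i) * q^(i*(l-k)) * PowerSeries.coeff (R := ℂ) (l-k) f := by
    intro i
    rw [PowerSeries.coeff_mul, Finset.Nat.sum_antidiagonal_eq_sum_range_succ_mk]
    refine Finset.sum_congr rfl fun k _ => ?_
    rw [PowerSeries.coeff_rescale, pow_mul]
    ring
  rw [map_sum]
  simp_rw [h1]
  rw [Finset.sum_comm]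
  refine Finset.sum_congr rfl fun k _ => ?_
  rw [Finset.sum_mul]

open PowerSeries in
theorem stmt_15 (q : ℂ) (hq : 1 < ‖q‖) (n : ℕ) (a : ℕ → PowerSeries ℂ)
    (ha0 : a 0 ≠ 0) (han : a n ≠ 0)
    -- `F_0(1) = 0`, i.e. 1 is a root of the characteristic polynomial of slope 0:
    (hchar : ∑ i ∈ Finset.range (n + 1), PowerSeries.coeff (R := ℂ) 0 (a i) = 0)
    -- nonresonance: `F_0(q^m) ≠ 0` for all `m ≥ 1`:
    (hnr : ∀ m : ℕ, 1 ≤ m →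
      ∑ i ∈ Finset.range (n + 1), PowerSeries.coeff (R := ℂ) 0 (a i) * q ^ (i * m) ≠ 0) :
    ∃! f : PowerSeries ℂ, PowerSeries.coeff (R := ℂ) 0 f = 1 ∧
      ∑ i ∈ Finset.range (n + 1), a i * PowerSeries.rescale (q ^ i) f = 0 := by
  classical
  set G : ℕ → ℕ → ℂ := fun k m => ∑ i ∈ Finset.range (n+1),
    PowerSeries.coeff (R := ℂ) k (a i) * q^(i*m) with hGdef
  have hG00 : G 0 0 = 0 := by simp only [hGdef]; simpa using hchar
  have hG0 : ∀ m, 1 ≤ m → G 0 m ≠ 0 := hnr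
  set c := solCoeff G with hc
  have hc0 : c 0 = 1 := by rw [hc, solCoeff]
  have hcs : ∀ l, c (l+1) =
      -(∑ k ∈ Finset.range (l+1), G (k+1) (l-k) * c (l-k)) / G 0 (l+1) := by
    intro l; rw [hc, solCoeff]
  have hkey : ∀ g : PowerSeries ℂ,
      (PowerSeries.coeff (R := ℂ) 0 g = 1 ∧
        ∑ i ∈ Finset.range (n+1), a i * PowerSeries.rescale (q^i) g = 0)
      ↔ ∀ l, PowerSeries.coeff (R := ℂ) l g = c l := by
    intro g
    constructor
    · rintro ⟨hg1, hg2⟩ l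
      have heq : ∀ l, ∑ k ∈ Finset.range (l+1),
          G k (l-k) * PowerSeries.coeff (R := ℂ) (l-k) g = 0 := by
        intro l
        have := congrArg (PowerSeries.coeff (R := ℂ) l) hg2
        rw [coeff_sum_eq, map_zero] at this
        exact this
      induction l using Nat.strong_induction_on with
      | _ l ih =>
        match l with
        | 0 => simpa [hc0] using hg1
        | (l+1) =>
          have h := heq (l+1)
          rw [Finset.sum_range_succ'] at h
          simp only [Nat.succ_sub_succ, Nat.sub_zero] at h
          have hS : ∑ k ∈ Finset.range (l+1),
              G (k+1) (l-k) * PowerSeries.coeff (R := ℂ) (l-k) g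
              = ∑ k ∈ Finset.range (l+1), G (k+1) (l-k) * c (l-k) := by
            refine Finset.sum_congr rfl fun k _ => ?_
            rw [ih (l-k) (Nat.lt_succ_of_le (Nat.sub_le l k))]
          rw [hS] at h
          have hne := hG0 (l+1) (Nat.succ_le_succ (Nat.zero_le l))
          rw [hcs l, eq_div_iff hne]
          linear_combination h
    · intro h
      have hsol : ∀ l, ∑ k ∈ Finset.range (l+1), G k (l-k) * c (l-k) = 0 := by
        intro l
        match l with
        | 0 => simp [hG00]
        | (l+1) =>
          rw [Finset.sum_range_succ']
          simp only [Nat.succ_sub_succ, Nat.sub_zero]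
          have hne := hG0 (l+1) (Nat.succ_le_succ (Nat.zero_le l))
          rw [hcs l, mul_comm (G 0 (l+1)), div_mul_cancel₀ _ hne]
          ring
      refine ⟨by rw [h 0, hc0], ?_⟩
      ext l
      rw [coeff_sum_eq, map_zero]
      simp_rw [h]
      exact hsol l
  refine ⟨PowerSeries.mk c, (hkey _).mpr (fun l => PowerSeries.coeff_mk l c), ?_⟩
  intro g hg
  ext l
  rw [(hkey g).mp hg l, PowerSeries.coeff_mk]
end
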